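/- For every natural number n ≥ 1 there exist, for each k ∈ Fin (n−1), distinct vertices i_k, j_k ∈ Fin n and a word w_k in the free group on Fin n, such that the graph on Fin n whose edge set is {{i_k, j_k} : k ∈ Fin (n−1)} is connected (hence a tree), and the group G presented by generators Fin n and the n−1 relators x_{i_k} · w_k · x_{j_k}⁻¹ · w_k⁻¹ has rank exactly n: G is generated by n elements, and no subset of G of cardinality less than n generates G. -/

import Mathlib

@[ext] structure DD (m : ℕ) where
  v : Fin m → ZMod 3
  s : Bool
namespace DD
variable {m : ℕ}
instance : Mul (DD m) := ⟨fun x y => ⟨x.v + (if x.s then -y.v else y.v), xor x.s y.s⟩⟩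
instance : One (DD m) := ⟨⟨0, false⟩⟩
instance : Inv (DD m) := ⟨fun x => ⟨if x.s then x.v else -x.v, x.s⟩⟩
@[simp] lemma mul_v (x y : DD m) : (x * y).v = x.v + (if x.s then -y.v else y.v) := rfl
@[simp] lemma mul_s (x y : DD m) : (x * y).s = xor x.s y.s := rfl
@[simp] lemma one_v : (1 : DD m).v = 0 := rfl
@[simp] lemma one_s : (1 : DD m).s = false := rfl
@[simp] lemma inv_v (x : DD m) : x⁻¹.v = if x.s then x.v else -x.v := rfl
@[simp] lemma inv_s (x : DD m) : x⁻¹.s = x.s := rfl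
instance : Group (DD m) where
  mul_assoc a b c := by
    ext l <;> rcases a with ⟨va, _ | _⟩ <;> rcases b with ⟨vb, _ | _⟩ <;>
      rcases c with ⟨vc, _ | _⟩ <;> simp <;> ring
  one_mul a := by ext l <;> simp
  mul_one a := by ext l <;> rcases a with ⟨v, _ | _⟩ <;> simp
  inv_mul_cancel a := by ext l <;> rcases a with ⟨v, _ | _⟩ <;> simp

lemma conj_identity (x y : DD m) (hx : x.s = true) (hy : y.s = true) :
    x * (x * y) ^ 2 * y⁻¹ * ((x * y) ^ 2)⁻¹ = 1 := by
  rcases x with ⟨a, _⟩; rcases y with ⟨b, _⟩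
  subst hx; subst hy
  have h3 : (3 : ZMod 3) = 0 := rfl
  ext l <;> simp [pow_two]
  linear_combination (b l - a l) * h3

def gen (i : Fin (m + 1)) : DD m :=
  ⟨fun l => if (i : ℕ) = (l : ℕ) + 1 then 1 else 0, true⟩

@[simp] lemma gen_s (i : Fin (m + 1)) : (gen i).s = true := rfl

lemma single_eq (l : Fin m) :
    (⟨Pi.single l 1, false⟩ : DD m) = gen ⟨(l : ℕ) + 1, Nat.succ_lt_succ l.isLt⟩ * gen 0 := by
  ext l'
  · simp only [mul_v, gen, Pi.single_apply, if_true]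
    simp only [Pi.add_apply, Pi.neg_apply]
    rcases eq_or_ne (l' : ℕ) (l : ℕ) with h | h
    · have h1 : l' = l := Fin.ext h
      subst h1; simp
    · have h2 : ¬ (l' = l) := fun hc => h (congrArg Fin.val hc)
      have h3 : ¬ ((l : ℕ) + 1 = (l' : ℕ) + 1) := by omega
      simp [h2, h3, Ne.symm h]
  · simp [gen]

lemma gen_injective : Function.Injective (gen (m := m)) := by
  intro i i' h
  by_contra hne
  have hv : (gen i).v = (gen i').v := congrArg DD.v h
  rcases Nat.lt_or_ge (i : ℕ) (i' : ℕ) with hlt | hge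
  · have hl : (i' : ℕ) - 1 < m := by omega
    have := congrFun hv ⟨(i' : ℕ) - 1, hl⟩
    simp only [gen] at this
    rw [if_neg (by omega), if_pos (by omega)] at this
    exact one_ne_zero this.symm
  · have hlt : (i' : ℕ) < (i : ℕ) := by
      have hne' : (i : ℕ) ≠ (i' : ℕ) := fun hc => hne (Fin.ext hc)
      omega
    have hl : (i : ℕ) - 1 < m := by omega
    have := congrFun hv ⟨(i : ℕ) - 1, hl⟩
    simp only [gen] at this
    rw [if_pos (by omega), if_neg (by omega)] at this
    exact one_ne_zero this

lemma gen_closure : Subgroup.closure (Set.range (gen (m := m))) = ⊤ := by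
  rw [eq_top_iff]
  rintro ⟨v, b⟩ -
  have hmem : ∀ i, gen (m := m) i ∈ Subgroup.closure (Set.range (gen (m := m))) :=
    fun i => Subgroup.subset_closure ⟨i, rfl⟩
  have htrans : ∀ w : Fin m → ZMod 3,
      (⟨w, false⟩ : DD m) ∈ Subgroup.closure (Set.range (gen (m := m))) := by
    let T : AddSubgroup (Fin m → ZMod 3) :=
      { carrier := {w | (⟨w, false⟩ : DD m) ∈ Subgroup.closure (Set.range (gen (m := m)))}
        zero_mem' := by
          have h1 : (⟨0, false⟩ : DD m) = 1 := rfl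
          show (⟨0, false⟩ : DD m) ∈ Subgroup.closure (Set.range (gen (m := m)))
          rw [h1]; exact one_mem _
        add_mem' := by
          intro a b ha hb
          have h1 : (⟨a + b, false⟩ : DD m) = ⟨a, false⟩ * ⟨b, false⟩ := by
            ext l <;> simp
          show (⟨a + b, false⟩ : DD m) ∈ Subgroup.closure (Set.range (gen (m := m)))
          rw [h1]; exact mul_mem ha hb
        neg_mem' := by
          intro a ha
          have h1 : (⟨-a, false⟩ : DD m) = (⟨a, false⟩ : DD m)⁻¹ := by
            ext l <;> simp
          show (⟨-a, false⟩ : DD m) ∈ Subgroup.closure (Set.range (gen (m := m)))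
          rw [h1]; exact inv_mem ha }
    have hsingle : ∀ l : Fin m, Pi.single l (1 : ZMod 3) ∈ T := by
      intro l
      show (⟨Pi.single l 1, false⟩ : DD m) ∈ Subgroup.closure (Set.range (gen (m := m)))
      rw [single_eq l]
      exact mul_mem (hmem _) (hmem _)
    intro w
    have hw : w ∈ T := by
      have h1 : w = ∑ l : Fin m, Pi.single l (w l) := (Finset.univ_sum_single w).symm
      rw [h1]
      refine AddSubgroup.sum_mem T fun l _ => ?_
      have h2 : (Pi.single l (w l) : Fin m → ZMod 3) = (w l).val • Pi.single l (1 : ZMod 3) := by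
        ext l'
        rcases eq_or_ne l' l with h | h
        · subst h; simp [Pi.single_apply, nsmul_eq_mul, ZMod.natCast_zmod_val]
        · simp [Pi.single_apply, h]
      rw [h2]
      exact AddSubgroup.nsmul_mem T (hsingle l) _
    exact hw
  cases b
  · exact htrans v
  · have h1 : (⟨v, true⟩ : DD m) = ⟨v, false⟩ * gen 0 := by
      ext l <;> simp [gen]
    rw [h1]
    exact mul_mem (htrans v) (hmem 0)

instance : Fact (Nat.Prime 3) := ⟨by norm_num⟩

lemma rank_lb (S : Finset (DD m)) (hS : Subgroup.closure (S : Set (DD m)) = ⊤) :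
    m + 1 ≤ S.card := by
  classical
  obtain ⟨s₀, hs₀S, hs₀⟩ : ∃ s₀ ∈ S, s₀.s = true := by
    by_contra hc
    push_neg at hc
    have hle : Subgroup.closure (S : Set (DD m)) ≤
        ({ carrier := {x | x.s = false}
           one_mem' := rfl
           mul_mem' := by
             rintro a b (ha : a.s = false) (hb : b.s = false)
             show xor a.s b.s = false
             rw [ha, hb]; rfl
           inv_mem' := by rintro a (ha : a.s = false); exact ha } : Subgroup (DD m)) := by
      rw [Subgroup.closure_le]
      intro x hx
      exact Bool.eq_false_iff.mpr (hc x hx)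
    rw [hS] at hle
    have : (⟨0, true⟩ : DD m).s = false := hle (Subgroup.mem_top _)
    simp at this
  set f : DD m → (Fin m → ZMod 3) := fun x => if x.s then x.v - s₀.v else x.v with hf
  set U : Submodule (ZMod 3) (Fin m → ZMod 3) := Submodule.span (ZMod 3) (f '' ↑S) with hU
  have hK : ∀ x : DD m, x ∈ Subgroup.closure (S : Set (DD m)) → f x ∈ U := by
    have hle : Subgroup.closure (S : Set (DD m)) ≤
        ({ carrier := {x | f x ∈ U}
           one_mem' := by
             show f 1 ∈ U
             simp only [hf, one_s, Bool.false_eq_true, if_false, one_v]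
             exact zero_mem U
           mul_mem' := by
             rintro ⟨a, sa⟩ ⟨b, sb⟩ ha hb
             simp only [Set.mem_setOf_eq, hf] at ha hb ⊢
             cases sa <;> cases sb <;> simp only [mul_v, mul_s] at ha hb ⊢ <;>
               norm_num at ha hb ⊢
             · exact add_mem ha hb
             · have h1 : a + b - s₀.v = a + (b - s₀.v) := by ring
               rw [h1]; exact add_mem ha hb
             · have h1 : a + -b - s₀.v = (a - s₀.v) + -b := by ring
               rw [h1]; exact add_mem ha (neg_mem hb)
             · have h1 : a + -b = (a - s₀.v) - (b - s₀.v) := by ring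
               rw [h1]; exact sub_mem ha hb
           inv_mem' := by
             rintro ⟨a, sa⟩ ha
             simp only [Set.mem_setOf_eq, hf] at ha ⊢
             cases sa <;> simp only [inv_v, inv_s] at ha ⊢ <;> norm_num at ha ⊢
             · exact ha
             · exact ha } : Subgroup (DD m)) := by
      rw [Subgroup.closure_le]
      intro x hx
      exact Submodule.subset_span ⟨x, hx, rfl⟩
    intro x hx
    exact hle hx
  have hUtop : U = ⊤ := by
    rw [eq_top_iff]
    intro w _
    have h1 : f ⟨w, false⟩ ∈ U := hK _ (by rw [hS]; exact Subgroup.mem_top _)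
    simpa [hf] using h1
  have hf0 : f s₀ = 0 := by simp [hf, hs₀]
  set T : Finset (Fin m → ZMod 3) := S.image f with hT
  have h0T : (0 : Fin m → ZMod 3) ∈ T := by
    rw [hT, Finset.mem_image]; exact ⟨s₀, hs₀S, hf0⟩
  have hspan : Submodule.span (ZMod 3) ((T.erase 0 : Finset _) : Set (Fin m → ZMod 3)) = ⊤ := by
    have h1 : Submodule.span (ZMod 3)
        (insert (0 : Fin m → ZMod 3) ((T.erase 0 : Finset _) : Set (Fin m → ZMod 3))) =
        Submodule.span (ZMod 3) ((T.erase 0 : Finset _) : Set (Fin m → ZMod 3)) :=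
      Submodule.span_insert_zero
    rw [← h1, ← Finset.coe_insert, Finset.insert_erase h0T, ← hUtop, hU, hT, Finset.coe_image]
  have hfr := finrank_span_finset_le_card (R := ZMod 3) (T.erase 0)
  rw [Set.finrank, hspan, finrank_top, Module.finrank_fin_fun] at hfr
  have hTS : T.card ≤ S.card := Finset.card_image_le
  have hTpos : 1 ≤ T.card := Finset.card_pos.mpr ⟨0, h0T⟩
  have herase : (T.erase 0).card = T.card - 1 := Finset.card_erase_of_mem h0T
  omega
end DD


/-- For every `n ≥ 1` there exists a labeled oriented tree presentation on
`Fin n` (relators `x_{i_k} · w_k · x_{j_k}⁻¹ · w_k⁻¹`, the pairs `{i_k, j_k}` forming a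
connected graph, hence a tree, on `Fin n`) whose group has rank exactly `n`: it is generated
by `n` elements, and no subset of cardinality less than `n` generates it. -/
theorem stmt_5 (n : ℕ) (hn : 1 ≤ n) :
    ∃ (i j : Fin (n - 1) → Fin n) (w : Fin (n - 1) → FreeGroup (Fin n)),
      (∀ k, i k ≠ j k) ∧
      (SimpleGraph.fromEdgeSet (Set.range fun k => s(i k, j k))).Connected ∧
      (∃ S : Finset (PresentedGroup
          (Set.range fun k => FreeGroup.of (i k) * w k * (FreeGroup.of (j k))⁻¹ * (w k)⁻¹)),
        S.card = n ∧ Subgroup.closure (S : Set (PresentedGroup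
          (Set.range fun k => FreeGroup.of (i k) * w k * (FreeGroup.of (j k))⁻¹ * (w k)⁻¹))) = ⊤) ∧
      (∀ S : Finset (PresentedGroup
          (Set.range fun k => FreeGroup.of (i k) * w k * (FreeGroup.of (j k))⁻¹ * (w k)⁻¹)),
        S.card < n → Subgroup.closure (S : Set (PresentedGroup
          (Set.range fun k => FreeGroup.of (i k) * w k * (FreeGroup.of (j k))⁻¹ * (w k)⁻¹))) ≠ ⊤) := by
  classical
  obtain ⟨m, rfl⟩ : ∃ m, n = m + 1 := ⟨n - 1, by omega⟩

  refine ⟨Fin.castSucc, Fin.succ,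
    fun k => (FreeGroup.of k.castSucc * FreeGroup.of k.succ) ^ 2, ?_, ?_, ?_, ?_⟩
  · exact fun k => (Fin.castSucc_lt_succ : k.castSucc < k.succ).ne
  · -- connectivity
    set G := SimpleGraph.fromEdgeSet
      (Set.range fun k : Fin m => s(Fin.castSucc k, Fin.succ k)) with hG
    have adj : ∀ k : Fin m, G.Adj k.castSucc k.succ := by
      intro k
      rw [hG, SimpleGraph.fromEdgeSet_adj]
      exact ⟨⟨k, rfl⟩, (Fin.castSucc_lt_succ : k.castSucc < k.succ).ne⟩
    have reach : ∀ x : Fin (m + 1), G.Reachable 0 x := by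
      intro x
      induction x using Fin.induction with
      | zero => exact SimpleGraph.Reachable.refl 0
      | succ k ih => exact ih.trans (adj k).reachable
    exact ⟨fun u v => (reach u).symm.trans (reach v)⟩
  · -- a generating set of cardinality m + 1
    have hrel : ∀ r ∈ (Set.range fun k : Fin m =>
        FreeGroup.of (Fin.castSucc k) *
          ((FreeGroup.of (Fin.castSucc k) * FreeGroup.of (Fin.succ k)) ^ 2) *
          (FreeGroup.of (Fin.succ k))⁻¹ *
          ((FreeGroup.of (Fin.castSucc k) * FreeGroup.of (Fin.succ k)) ^ 2)⁻¹),
        FreeGroup.lift (DD.gen (m := m)) r = 1 := by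
      rintro r ⟨k, rfl⟩
      simp only [map_mul, map_inv, map_pow, FreeGroup.lift_apply_of]
      exact DD.conj_identity _ _ rfl rfl
    have hφof : ∀ x, PresentedGroup.toGroup hrel (PresentedGroup.of x) = DD.gen x :=
      fun x => PresentedGroup.toGroup.of hrel
    refine ⟨Finset.univ.image (fun x : Fin (m + 1) => PresentedGroup.of x), ?_, ?_⟩
    · rw [Finset.card_image_of_injective _ (fun x y h => DD.gen_injective
        (by rw [← hφof x, ← hφof y, h])), Finset.card_univ, Fintype.card_fin]
    · rw [Finset.coe_image, Finset.coe_univ, Set.image_univ]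
      exact PresentedGroup.closure_range_of _
  · -- no generating set of cardinality < m + 1
    intro S hcard htop
    have hrel : ∀ r ∈ (Set.range fun k : Fin m =>
        FreeGroup.of (Fin.castSucc k) *
          ((FreeGroup.of (Fin.castSucc k) * FreeGroup.of (Fin.succ k)) ^ 2) *
          (FreeGroup.of (Fin.succ k))⁻¹ *
          ((FreeGroup.of (Fin.castSucc k) * FreeGroup.of (Fin.succ k)) ^ 2)⁻¹),
        FreeGroup.lift (DD.gen (m := m)) r = 1 := by
      rintro r ⟨k, rfl⟩
      simp only [map_mul, map_inv, map_pow, FreeGroup.lift_apply_of]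
      exact DD.conj_identity _ _ rfl rfl
    have hφof : ∀ x, PresentedGroup.toGroup hrel (PresentedGroup.of x) = DD.gen x :=
      fun x => PresentedGroup.toGroup.of hrel
    have hsurj : Function.Surjective (PresentedGroup.toGroup hrel) := by
      rw [← MonoidHom.range_eq_top, eq_top_iff, ← DD.gen_closure, Subgroup.closure_le]
      rintro x ⟨i0, rfl⟩
      exact ⟨PresentedGroup.of i0, hφof i0⟩
    have hmap : Subgroup.closure
        ((S.image (PresentedGroup.toGroup hrel) : Finset (DD m)) : Set (DD m)) = ⊤ := by
      rw [Finset.coe_image, ← MonoidHom.map_closure, htop,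
        Subgroup.map_top_of_surjective _ hsurj]
    have h1 := DD.rank_lb _ hmap
    have h2 : (S.image (PresentedGroup.toGroup hrel)).card ≤ S.card := Finset.card_image_le
    omega
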